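/- Envelope bound: the SURE integrand f(x1, x2, μ; t) satisfies |f(x1, x2, μ; t)| ≤ F_n(x1, μ) := σ1² + (4σ1²/ρ) log(n/(2πσ1σ2)) + (2^{1/2}σ1/ρ^{1/2}) |x1 − μ| log^{1/2}(n/(2πσ1σ2)), uniformly over all parameter vectors t with n components per coordinate, for all sufficiently large n and ρ ∈ (0,1]. -/

import Mathlib

open Real

/-- Standard normal density. -/
noncomputable def gphi (x : ℝ) : ℝ := (Real.sqrt (2 * Real.pi))⁻¹ * Real.exp (-x ^ 2 / 2)

/-- Joint density of two independent normals with means `(t1, t2)` and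
standard deviations `(σ1, σ2)`. -/
noncomputable def pdens (σ1 σ2 t1 t2 x1 x2 : ℝ) : ℝ :=
  gphi ((x1 - t1) / σ1) * gphi ((x2 - t2) / σ2) / (σ1 * σ2)

/-- `A(x1,x2)`. -/
noncomputable def termA (n : ℕ) (σ1 σ2 ρ : ℝ) (t : Fin n → Fin 2 → ℝ) (x1 x2 : ℝ) : ℝ :=
  (∑ j : Fin n, (t j 0 - x1) ^ 2 * pdens σ1 σ2 (t j 0) (t j 1) x1 x2) /
  (ρ + ∑ j : Fin n, pdens σ1 σ2 (t j 0) (t j 1) x1 x2)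

/-- `B(x1,x2)`. -/
noncomputable def termB (n : ℕ) (σ1 σ2 ρ : ℝ) (t : Fin n → Fin 2 → ℝ) (x1 x2 : ℝ) : ℝ :=
  (∑ j : Fin n, pdens σ1 σ2 (t j 0) (t j 1) x1 x2) /
  (ρ + ∑ j : Fin n, pdens σ1 σ2 (t j 0) (t j 1) x1 x2)

/-- `C(x1,x2)`. -/
noncomputable def termC (n : ℕ) (σ1 σ2 ρ : ℝ) (t : Fin n → Fin 2 → ℝ) (x1 x2 : ℝ) : ℝ :=
  (∑ j : Fin n, (t j 0 - x1) * pdens σ1 σ2 (t j 0) (t j 1) x1 x2) /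
  (ρ + ∑ j : Fin n, pdens σ1 σ2 (t j 0) (t j 1) x1 x2)

lemma gphi_nonneg (x : ℝ) : 0 ≤ gphi x := by
  unfold gphi; positivity

lemma gphi_le_inv_sqrt (x : ℝ) : gphi x ≤ (Real.sqrt (2 * Real.pi))⁻¹ := by
  unfold gphi
  have h1 : Real.exp (-x ^ 2 / 2) ≤ 1 := by
    rw [Real.exp_le_one_iff]; nlinarith [sq_nonneg x]
  have h2 : (0:ℝ) ≤ (Real.sqrt (2 * Real.pi))⁻¹ := by positivity
  nlinarith

lemma pdens_nonneg (σ1 σ2 t1 t2 x1 x2 : ℝ) (hσ1 : 0 < σ1) (hσ2 : 0 < σ2) :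
    0 ≤ pdens σ1 σ2 t1 t2 x1 x2 := by
  unfold pdens
  have := gphi_nonneg ((x1 - t1) / σ1)
  have := gphi_nonneg ((x2 - t2) / σ2)
  positivity

lemma pdens_le (σ1 σ2 t1 t2 x1 x2 : ℝ) (hσ1 : 0 < σ1) (hσ2 : 0 < σ2) :
    pdens σ1 σ2 t1 t2 x1 x2 ≤
      Real.exp (-(t1 - x1) ^ 2 / (2 * σ1 ^ 2)) / (2 * Real.pi * σ1 * σ2) := by
  have hπ : (0:ℝ) < 2 * Real.pi := by positivity
  have hs : Real.sqrt (2 * Real.pi) * Real.sqrt (2 * Real.pi) = 2 * Real.pi :=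
    Real.mul_self_sqrt hπ.le
  have ha : gphi ((x1 - t1) / σ1) =
      (Real.sqrt (2 * Real.pi))⁻¹ * Real.exp (-(t1 - x1) ^ 2 / (2 * σ1 ^ 2)) := by
    unfold gphi
    have he : -((x1 - t1) / σ1) ^ 2 / 2 = -(t1 - x1) ^ 2 / (2 * σ1 ^ 2) := by
      field_simp; ring
    rw [he]
  have h1 : gphi ((x1 - t1) / σ1) * gphi ((x2 - t2) / σ2) ≤
      Real.exp (-(t1 - x1) ^ 2 / (2 * σ1 ^ 2)) / (2 * Real.pi) := by
    have hb := gphi_le_inv_sqrt ((x2 - t2) / σ2)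
    have hga := gphi_nonneg ((x1 - t1) / σ1)
    calc gphi ((x1 - t1) / σ1) * gphi ((x2 - t2) / σ2)
        ≤ gphi ((x1 - t1) / σ1) * (Real.sqrt (2 * Real.pi))⁻¹ :=
          mul_le_mul_of_nonneg_left hb hga
      _ = Real.exp (-(t1 - x1) ^ 2 / (2 * σ1 ^ 2)) /
            (Real.sqrt (2 * Real.pi) * Real.sqrt (2 * Real.pi)) := by
          rw [ha]; ring
      _ = Real.exp (-(t1 - x1) ^ 2 / (2 * σ1 ^ 2)) / (2 * Real.pi) := by rw [hs]
  unfold pdens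
  calc gphi ((x1 - t1) / σ1) * gphi ((x2 - t2) / σ2) / (σ1 * σ2)
      ≤ Real.exp (-(t1 - x1) ^ 2 / (2 * σ1 ^ 2)) / (2 * Real.pi) / (σ1 * σ2) := by
        gcongr
    _ = Real.exp (-(t1 - x1) ^ 2 / (2 * σ1 ^ 2)) / (2 * Real.pi * σ1 * σ2) := by
        rw [div_div]; ring_nf

/-- Per-term bound. -/
lemma key_term (σ1 M L nr u p : ℝ) (hσ1 : 0 < σ1) (hM : 0 < M) (hL : 1 ≤ L)
    (hexp : Real.exp L = nr / M) (hp0 : 0 ≤ p)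
    (hple : p ≤ Real.exp (-u ^ 2 / (2 * σ1 ^ 2)) / M) :
    u ^ 2 * p ≤ 2 * σ1 ^ 2 * L * p + 2 * σ1 ^ 2 * L / nr := by
  have hnr : 0 < nr := by
    have h := Real.exp_pos L
    rw [hexp, div_pos_iff] at h
    rcases h with ⟨h1, _⟩ | ⟨_, h2⟩
    · exact h1
    · linarith
  have hL0 : 0 < L := lt_of_lt_of_le one_pos hL
  rcases le_or_gt (u ^ 2) (2 * σ1 ^ 2 * L) with h | h
  · have h1 : u ^ 2 * p ≤ 2 * σ1 ^ 2 * L * p := mul_le_mul_of_nonneg_right h hp0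
    have h2 : 0 ≤ 2 * σ1 ^ 2 * L / nr := by positivity
    linarith
  · have hc : (0:ℝ) < 2 * σ1 ^ 2 := by positivity
    set c := 2 * σ1 ^ 2 with hcdef
    set v := u ^ 2 with hvdef
    set w := c * L with hwdef
    have hw : c ≤ w := by rw [hwdef]; nlinarith
    have hvw : w ≤ v := h.le
    have hv0 : (0:ℝ) ≤ v := sq_nonneg u
    have hmono : v * Real.exp (-v / c) ≤ w * Real.exp (-w / c) := by
      have hw0 : 0 < w := lt_of_lt_of_le hc hw
      have hratio : v ≤ w * Real.exp ((v - w) / c) := by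
        have h1 : (v - w) / c + 1 ≤ Real.exp ((v - w) / c) := Real.add_one_le_exp _
        have h2 : v / w ≤ (v - w) / c + 1 := by
          rw [div_le_iff₀ hw0]
          have h3 : (v - w) / c * c ≤ (v - w) / c * w :=
            mul_le_mul_of_nonneg_left hw (div_nonneg (by linarith) hc.le)
          have h4 : (v - w) / c * c = v - w := by field_simp
          nlinarith
        calc v = v / w * w := by field_simp
          _ ≤ ((v - w) / c + 1) * w := mul_le_mul_of_nonneg_right h2 hw0.le
          _ ≤ Real.exp ((v - w) / c) * w := mul_le_mul_of_nonneg_right h1 hw0.le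
          _ = w * Real.exp ((v - w) / c) := by ring
      calc v * Real.exp (-v / c)
          ≤ w * Real.exp ((v - w) / c) * Real.exp (-v / c) :=
            mul_le_mul_of_nonneg_right hratio (Real.exp_pos _).le
        _ = w * Real.exp (-w / c) := by
            rw [mul_assoc, ← Real.exp_add]
            congr 2
            rw [← add_div]
            congr 1
            ring
    have hexpw : Real.exp (-w / c) = M / nr := by
      have he : -w / c = -L := by
        rw [hwdef, neg_div, mul_comm, mul_div_assoc, div_self hc.ne', mul_one]
      rw [he, Real.exp_neg, hexp]
      field_simp
    have hstep : v * p ≤ w / nr := by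
      calc v * p ≤ v * (Real.exp (-v / c) / M) := mul_le_mul_of_nonneg_left hple hv0
        _ = v * Real.exp (-v / c) / M := by ring
        _ ≤ w * Real.exp (-w / c) / M := by gcongr
        _ = w * (M / nr) / M := by rw [hexpw]
        _ = w / nr := by field_simp
    have hp2 : 0 ≤ c * L * p := by positivity
    calc v * p ≤ w / nr := hstep
      _ = c * L / nr := rfl
      _ ≤ c * L * p + c * L / nr := by linarith

/-- Envelope bound: for all sufficiently large `n`, uniformly over all parameter
vectors `t`, the SURE integrand satisfies
`|f(x1,x2,μ;t)| ≤ F_n(x1,μ) = σ1² + (4σ1²/ρ) log(n/(2πσ1σ2)) +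
(√2 σ1/√ρ) |x1 − μ| log^{1/2}(n/(2πσ1σ2))`. -/
theorem stmt13 (σ1 σ2 ρ : ℝ) (hσ1 : 0 < σ1) (hσ2 : 0 < σ2)
    (hρ0 : 0 < ρ) (hρ1 : ρ ≤ 1) :
    ∃ N : ℕ, ∀ n : ℕ, N ≤ n → ∀ (t : Fin n → Fin 2 → ℝ) (x1 x2 μ : ℝ),
      |termA n σ1 σ2 ρ t x1 x2 - σ1 ^ 2 * termB n σ1 σ2 ρ t x1 x2 -
          (termC n σ1 σ2 ρ t x1 x2) ^ 2 - (x1 - μ) * termC n σ1 σ2 ρ t x1 x2| ≤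
        σ1 ^ 2 + 4 * σ1 ^ 2 / ρ * Real.log ((n : ℝ) / (2 * Real.pi * σ1 * σ2)) +
          Real.sqrt 2 * σ1 / Real.sqrt ρ * |x1 - μ| *
            Real.sqrt (Real.log ((n : ℝ) / (2 * Real.pi * σ1 * σ2))) := by
  set M : ℝ := 2 * Real.pi * σ1 * σ2 with hMdef
  have hM : 0 < M := by positivity
  refine ⟨⌈Real.exp 1 * M⌉₊ + 1, fun n hn t x1 x2 μ => ?_⟩
  have hnM : Real.exp 1 * M ≤ (n : ℝ) := by
    calc Real.exp 1 * M ≤ (⌈Real.exp 1 * M⌉₊ : ℝ) := Nat.le_ceil _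
      _ ≤ (n : ℝ) := by exact_mod_cast Nat.le_of_succ_le hn
  have hn0 : (0:ℝ) < (n : ℝ) := by nlinarith [Real.exp_pos 1]
  set L : ℝ := Real.log ((n : ℝ) / M) with hLdef
  have hL1 : 1 ≤ L := by
    rw [hLdef, Real.le_log_iff_exp_le (by positivity), le_div_iff₀ hM]
    linarith
  have hL0 : 0 < L := lt_of_lt_of_le one_pos hL1
  have hexpL : Real.exp L = (n : ℝ) / M := Real.exp_log (by positivity)
  set p : Fin n → ℝ := fun j => pdens σ1 σ2 (t j 0) (t j 1) x1 x2 with hpdef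
  have hp0 : ∀ j, 0 ≤ p j := fun j => pdens_nonneg _ _ _ _ _ _ hσ1 hσ2
  set sp : ℝ := ∑ j : Fin n, p j with hspdef
  have hsp0 : 0 ≤ sp := Finset.sum_nonneg fun j _ => hp0 j
  have hS : 0 < ρ + sp := by linarith
  set u : Fin n → ℝ := fun j => t j 0 - x1 with hudef
  have hnum : (∑ j : Fin n, u j ^ 2 * p j) ≤ 2 * σ1 ^ 2 * L * (sp + 1) := by
    have hterm : ∀ j : Fin n, u j ^ 2 * p j ≤
        2 * σ1 ^ 2 * L * p j + 2 * σ1 ^ 2 * L / (n : ℝ) := fun j =>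
      key_term σ1 M L (n : ℝ) (u j) (p j) hσ1 hM hL1 hexpL (hp0 j)
        (pdens_le σ1 σ2 (t j 0) (t j 1) x1 x2 hσ1 hσ2)
    calc (∑ j : Fin n, u j ^ 2 * p j)
        ≤ ∑ j : Fin n, (2 * σ1 ^ 2 * L * p j + 2 * σ1 ^ 2 * L / (n : ℝ)) :=
          Finset.sum_le_sum fun j _ => hterm j
      _ = 2 * σ1 ^ 2 * L * sp + (n : ℝ) * (2 * σ1 ^ 2 * L / (n : ℝ)) := by
          rw [Finset.sum_add_distrib, ← Finset.mul_sum, Finset.sum_const]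
          simp [hspdef]
      _ = 2 * σ1 ^ 2 * L * (sp + 1) := by field_simp
  have hA0 : 0 ≤ termA n σ1 σ2 ρ t x1 x2 := by
    unfold termA
    exact div_nonneg (Finset.sum_nonneg fun j _ =>
      mul_nonneg (sq_nonneg _) (hp0 j)) hS.le
  have hAle : termA n σ1 σ2 ρ t x1 x2 ≤ 2 * σ1 ^ 2 * L / ρ := by
    unfold termA
    have hd : ρ * (sp + 1) ≤ ρ + sp := by nlinarith
    have hd0 : 0 < ρ * (sp + 1) := by positivity
    calc (∑ j : Fin n, (t j 0 - x1) ^ 2 * p j) / (ρ + sp)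
        ≤ 2 * σ1 ^ 2 * L * (sp + 1) / (ρ * (sp + 1)) :=
          div_le_div₀ (by positivity) hnum hd0 hd
      _ = 2 * σ1 ^ 2 * L / ρ := by
          rw [mul_comm ρ (sp + 1), ← div_div, mul_div_assoc]
          field_simp
  have hB0 : 0 ≤ termB n σ1 σ2 ρ t x1 x2 := div_nonneg hsp0 hS.le
  have hB1 : termB n σ1 σ2 ρ t x1 x2 ≤ 1 := by
    unfold termB
    rw [div_le_one hS]
    linarith
  have hCsq : (termC n σ1 σ2 ρ t x1 x2) ^ 2 ≤ termA n σ1 σ2 ρ t x1 x2 := by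
    have hcs : (∑ j : Fin n, u j * p j) ^ 2 ≤
        (∑ j : Fin n, u j ^ 2 * p j) * sp := by
      have hcs0 := Finset.sum_mul_sq_le_sq_mul_sq Finset.univ
        (fun j => u j * Real.sqrt (p j)) (fun j => Real.sqrt (p j))
      have e1 : ∀ j : Fin n, u j * Real.sqrt (p j) * Real.sqrt (p j) = u j * p j := by
        intro j; rw [mul_assoc, Real.mul_self_sqrt (hp0 j)]
      have e2 : ∀ j : Fin n, (u j * Real.sqrt (p j)) ^ 2 = u j ^ 2 * p j := by
        intro j; rw [mul_pow, Real.sq_sqrt (hp0 j)]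
      have e3 : ∀ j : Fin n, (Real.sqrt (p j)) ^ 2 = p j := fun j => Real.sq_sqrt (hp0 j)
      calc (∑ j : Fin n, u j * p j) ^ 2
          = (∑ j : Fin n, u j * Real.sqrt (p j) * Real.sqrt (p j)) ^ 2 := by
            congr 1; exact (Finset.sum_congr rfl fun j _ => e1 j).symm
        _ ≤ (∑ j : Fin n, (u j * Real.sqrt (p j)) ^ 2) * ∑ j : Fin n, (Real.sqrt (p j)) ^ 2 :=
            hcs0
        _ = (∑ j : Fin n, u j ^ 2 * p j) * sp := by
            rw [Finset.sum_congr rfl fun j _ => e2 j, Finset.sum_congr rfl fun j _ => e3 j]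
    have hAB : (termC n σ1 σ2 ρ t x1 x2) ^ 2 ≤
        termA n σ1 σ2 ρ t x1 x2 * termB n σ1 σ2 ρ t x1 x2 := by
      unfold termC termA termB
      rw [div_pow, div_mul_div_comm, ← pow_two]
      exact div_le_div₀ (mul_nonneg (Finset.sum_nonneg fun j _ =>
        mul_nonneg (sq_nonneg _) (hp0 j)) hsp0) hcs (pow_pos hS 2) le_rfl
    calc (termC n σ1 σ2 ρ t x1 x2) ^ 2
        ≤ termA n σ1 σ2 ρ t x1 x2 * termB n σ1 σ2 ρ t x1 x2 := hAB
      _ ≤ termA n σ1 σ2 ρ t x1 x2 := mul_le_of_le_one_right hA0 hB1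
  have hCabs : |termC n σ1 σ2 ρ t x1 x2| ≤ Real.sqrt 2 * σ1 / Real.sqrt ρ * Real.sqrt L := by
    rw [← Real.sqrt_sq_eq_abs]
    have e : (Real.sqrt 2 * σ1 / Real.sqrt ρ * Real.sqrt L) ^ 2 = 2 * σ1 ^ 2 * L / ρ := by
      rw [mul_pow, div_pow, mul_pow, Real.sq_sqrt (by norm_num : (0:ℝ) ≤ 2),
        Real.sq_sqrt hρ0.le, Real.sq_sqrt hL0.le]
      ring
    calc Real.sqrt ((termC n σ1 σ2 ρ t x1 x2) ^ 2)
        ≤ Real.sqrt (2 * σ1 ^ 2 * L / ρ) := Real.sqrt_le_sqrt (hCsq.trans hAle)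
      _ = Real.sqrt 2 * σ1 / Real.sqrt ρ * Real.sqrt L := by
          rw [← e, Real.sqrt_sq (by positivity)]
  -- final assembly
  set A := termA n σ1 σ2 ρ t x1 x2
  set B := termB n σ1 σ2 ρ t x1 x2
  set C := termC n σ1 σ2 ρ t x1 x2
  have hxc : |(x1 - μ) * C| ≤ |x1 - μ| * (Real.sqrt 2 * σ1 / Real.sqrt ρ * Real.sqrt L) := by
    rw [abs_mul]
    exact mul_le_mul_of_nonneg_left hCabs (abs_nonneg _)
  set R3 := Real.sqrt 2 * σ1 / Real.sqrt ρ * |x1 - μ| * Real.sqrt L with hR3def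
  have heq2 : |x1 - μ| * (Real.sqrt 2 * σ1 / Real.sqrt ρ * Real.sqrt L) = R3 := by
    rw [hR3def]; ring
  have hxcR : (x1 - μ) * C ≤ R3 := (le_abs_self _).trans (hxc.trans_eq heq2)
  have hxcL : -R3 ≤ (x1 - μ) * C := by
    have h1 : -((x1 - μ) * C) ≤ |(x1 - μ) * C| := neg_le_abs _
    have h2 := hxc.trans_eq heq2
    linarith
  have hBσ : σ1 ^ 2 * B ≤ σ1 ^ 2 := by nlinarith [sq_nonneg σ1]
  have hBσ0 : 0 ≤ σ1 ^ 2 * B := by positivity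
  have hC2 : 0 ≤ C ^ 2 := sq_nonneg C
  have hC2le : C ^ 2 ≤ 2 * σ1 ^ 2 * L / ρ := hCsq.trans hAle
  have heq1 : 2 * (2 * σ1 ^ 2 * L / ρ) = 4 * σ1 ^ 2 / ρ * L := by ring
  rw [abs_le]
  constructor
  · linarith
  · linarith
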